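/- For r ≥ 1, k ≥ 0 and n ≥ k+r+1, the total number of left asymmetric peaks of weight k+1 over all partial Dyck paths from (0,0) to (2n-r, r) equals r·binom(2(n-k)-r-3, n-k-r-1) + binom(2(n-k)-r-3, n-k). -/

import Mathlib

/-- A path (`true` = up step, `false` = down step) never goes below the x-axis. -/
def DyckNonneg (p : List Bool) : Prop :=
  ∀ q : List Bool, q <+: p → q.count false ≤ q.count true


open List

namespace DyckAux

def bal (p : List Bool) : ℤ := (p.count true : ℤ) - (p.count false : ℤ)

lemma bal_append (p q : List Bool) : bal (p ++ q) = bal p + bal q := by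
  simp [bal, List.count_append]; ring

@[simp] lemma bal_nil : bal [] = 0 := by simp [bal]

lemma count_tf (p : List Bool) : p.count true + p.count false = p.length := by
  induction p with
  | nil => simp
  | cons a l ih => cases a <;> simp [List.count_cons] <;> omega

lemma bal_eq (p : List Bool) : bal p = 2 * (p.count true : ℤ) - (p.length : ℤ) := by
  have := count_tf p
  unfold bal; omega

lemma dyckNonneg_iff (p : List Bool) : DyckNonneg p ↔ ∀ i, 0 ≤ bal (p.take i) := by
  constructor
  · intro h i
    have := h (p.take i) (List.take_prefix i p)
    unfold bal; omega
  · intro h q hq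
    have hq' := List.prefix_iff_eq_take.mp hq
    have := h q.length
    rw [← hq'] at this
    unfold bal at this; omega

lemma dyckNonneg_balance {p : List Bool} (h : DyckNonneg p) : 0 ≤ bal p := by
  have := h p (List.prefix_refl p); unfold bal; omega

lemma dyckNonneg_append (P Q : List Bool) :
    DyckNonneg (P ++ Q) ↔ DyckNonneg P ∧ ∀ i, 0 ≤ bal P + bal (Q.take i) := by
  have expand : ∀ i, bal ((P ++ Q).take i) = bal (P.take i) + bal (Q.take (i - P.length)) := by
    intro i; rw [List.take_append, bal_append]
  constructor
  · intro h
    refine ⟨fun q hq => h q (hq.trans (List.prefix_append P Q)), fun i => ?_⟩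
    have := (dyckNonneg_iff _).mp h (P.length + i)
    rw [expand] at this
    rw [List.take_of_length_le (by omega)] at this
    simpa using this
  · rintro ⟨h1, h2⟩
    rw [dyckNonneg_iff]
    intro i
    rw [expand]
    rcases le_or_gt i P.length with hi | hi
    · have : i - P.length = 0 := by omega
      rw [this]
      simpa using (dyckNonneg_iff _).mp h1 i
    · rw [List.take_of_length_le (by omega)]
      exact h2 _

lemma bal_take_mid (a b i : ℕ) (Y : List Bool) :
    bal ((replicate a true ++ (replicate b false ++ Y)).take i)
      = ((min i a : ℕ) : ℤ) - ((min (i - a) b : ℕ) : ℤ) + bal (Y.take (i - a - b)) := by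
  rw [List.take_append, List.take_append, bal_append, bal_append,
    List.take_replicate, List.take_replicate, List.length_replicate, List.length_replicate]
  have h1 : bal (replicate (min i a) true) = ((min i a : ℕ) : ℤ) := by
    simp [bal, List.count_replicate]
  have h2 : bal (replicate (min (i - a) b) false) = -((min (i - a) b : ℕ) : ℤ) := by
    simp [bal, List.count_replicate]
  rw [show i ⊓ a = min i a from rfl, show (i-a) ⊓ b = min (i-a) b from rfl, h1, h2]
  ring

lemma nonneg_mid (X Y : List Bool) (a b : ℕ) (hba : b ≤ a) :
    DyckNonneg (X ++ (replicate a true ++ (replicate b false ++ Y))) ↔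
      DyckNonneg X ∧ ∀ i, 0 ≤ bal X + ((a : ℤ) - (b : ℤ)) + bal (Y.take i) := by
  rw [dyckNonneg_append]
  constructor
  · rintro ⟨hX, h⟩
    refine ⟨hX, fun i => ?_⟩
    have := h (a + b + i)
    rw [bal_take_mid] at this
    have e1 : min (a + b + i) a = a := by omega
    have e2 : min (a + b + i - a) b = b := by omega
    have e3 : a + b + i - a - b = i := by omega
    rw [e1, e2, e3] at this
    push_cast at this ⊢
    linarith
  · rintro ⟨hX, h⟩
    have hbX := dyckNonneg_balance hX
    refine ⟨hX, fun i => ?_⟩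
    rw [bal_take_mid]
    rcases le_or_gt i a with hi | hi
    · have e1 : min i a = i := by omega
      have e2 : min (i - a) b = 0 := by omega
      have e3 : i - a - b = 0 := by omega
      rw [e1, e2, e3]
      simp only [List.take_zero, bal_nil, add_zero, Nat.cast_zero, sub_zero]
      push_cast
      linarith
    · rcases le_or_gt i (a + b) with hi2 | hi2
      · have e1 : min i a = a := by omega
        have e2 : min (i - a) b = i - a := by omega
        have e3 : i - a - b = 0 := by omega
        rw [e1, e2, e3]
        simp only [List.take_zero, bal_nil, add_zero]
        have h2 : ((i - a : ℕ) : ℤ) ≤ (b : ℤ) := by push_cast; omega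
        push_cast
        push_cast at h2
        linarith
      · have e1 : min i a = a := by omega
        have e2 : min (i - a) b = b := by omega
        rw [e1, e2]
        have := h (i - a - b)
        linarith

lemma snoc_true (W : List Bool) : DyckNonneg (W ++ [true]) ↔ DyckNonneg W := by
  rw [dyckNonneg_append]
  constructor
  · rintro ⟨h, _⟩; exact h
  · intro h
    refine ⟨h, fun i => ?_⟩
    have hb := dyckNonneg_balance h
    rcases i with _ | i
    · simpa
    · have ht : ([true] : List Bool).take (i+1) = [true] := by
        apply List.take_of_length_le; simp
      rw [ht]
      have h1 : bal [true] = 1 := by simp [bal]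
      rw [h1]; linarith

lemma snoc_false (W : List Bool) : DyckNonneg (W ++ [false]) ↔ DyckNonneg W ∧ 1 ≤ bal W := by
  rw [dyckNonneg_append]
  constructor
  · rintro ⟨h, h2⟩
    refine ⟨h, ?_⟩
    have h3 := h2 1
    have h1 : bal (([false] : List Bool).take 1) = -1 := by simp [bal]
    rw [h1] at h3; linarith
  · rintro ⟨h, hb⟩
    refine ⟨h, fun i => ?_⟩
    rcases i with _ | i
    · simpa using dyckNonneg_balance h
    · have ht : ([false] : List Bool).take (i+1) = [false] := by
        apply List.take_of_length_le; simp
      rw [ht]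
      have h1 : bal [false] = -1 := by simp [bal]
      rw [h1]; linarith

end DyckAux

namespace DyckAux

def DSet (L t : ℕ) : Set (List Bool) :=
  {p | DyckNonneg p ∧ p.count true = t ∧ p.length = L}

lemma DSet_finite (L t : ℕ) : (DSet L t).Finite := by
  apply (List.finite_length_le Bool L).subset
  rintro p ⟨-, -, hl⟩
  simp [hl]

lemma choose_desc {n k : ℕ} (h : n ≤ 2 * k + 1) : Nat.choose n (k + 1) ≤ Nat.choose n k := by
  have hid := Nat.choose_succ_right_eq n k
  have h2 : Nat.choose n k * (n - k) ≤ Nat.choose n k * (k + 1) :=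
    Nat.mul_le_mul_left _ (by omega)
  have := hid.trans_le h2
  exact Nat.le_of_mul_le_mul_right this (by omega)

lemma choose_asc {n k : ℕ} (h : 2 * k < n) : Nat.choose n k ≤ Nat.choose n (k + 1) := by
  have hid := Nat.choose_succ_right_eq n k
  have h2 : Nat.choose n k * (k + 1) ≤ Nat.choose n k * (n - k) :=
    Nat.mul_le_mul_left _ (by omega)
  rw [← hid] at h2
  exact Nat.le_of_mul_le_mul_right h2 (by omega)

lemma DSet_empty_of_lt {L t : ℕ} (h : 2 * t < L) : DSet L t = ∅ := by
  ext p
  simp only [Set.mem_empty_iff_false, iff_false]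
  rintro ⟨hnn, hc, hl⟩
  have hb := dyckNonneg_balance hnn
  rw [bal_eq, hc, hl] at hb
  omega

lemma dyckNonneg_nil : DyckNonneg ([] : List Bool) := by
  intro q hq
  simp [List.prefix_nil.mp hq]

lemma DSet_zero_zero : DSet 0 0 = {([] : List Bool)} := by
  ext p
  constructor
  · rintro ⟨-, -, hl⟩
    simpa using List.length_eq_zero_iff.mp hl
  · rintro rfl
    exact ⟨dyckNonneg_nil, by simp, by simp⟩

lemma DSet_zero_pos {t : ℕ} (ht : 1 ≤ t) : DSet 0 t = ∅ := by
  ext p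
  simp only [Set.mem_empty_iff_false, iff_false]
  rintro ⟨-, hc, hl⟩
  rw [List.length_eq_zero_iff.mp hl] at hc
  simp at hc
  omega

lemma DSet_card (L t : ℕ) : (DSet L t).ncard = Nat.choose L t - Nat.choose L (t + 1) := by
  induction L generalizing t with
  | zero =>
    rcases Nat.eq_zero_or_pos t with rfl | ht
    · rw [DSet_zero_zero]
      simp
    · rw [DSet_zero_pos ht]
      simp [Nat.choose_eq_zero_of_lt ht, Nat.choose_eq_zero_of_lt (by omega : (0:ℕ) < t+1)]
  | succ L ih =>
    rcases le_or_gt (2 * t) L with hle | hgt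
    · rw [DSet_empty_of_lt (by omega)]
      have := choose_asc (n := L + 1) (k := t) (by omega)
      simp [Set.ncard_empty]
      omega
    · obtain ⟨u, rfl⟩ : ∃ u, t = u + 1 := ⟨t - 1, by omega⟩
      have hsplit : DSet (L + 1) (u+1) =
          ((· ++ [true]) '' DSet L (u)) ∪ ((· ++ [false]) '' DSet L (u+1)) := by
        ext p
        constructor
        · rintro ⟨hnn, hc, hl⟩
          rcases List.eq_nil_or_concat p with rfl | ⟨q, b, rfl⟩
          · simp at hl
          · rw [List.concat_eq_append] at *
            cases b
            · right
              refine ⟨q, ⟨((snoc_false q).mp hnn).1, ?_, ?_⟩, rfl⟩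
              · simpa using hc
              · simpa using hl
            · left
              refine ⟨q, ⟨(snoc_true q).mp hnn, ?_, ?_⟩, rfl⟩
              · simp [List.count_append] at hc ⊢; omega
              · simpa using hl
        · rintro (⟨q, ⟨hnn, hc, hl⟩, rfl⟩ | ⟨q, ⟨hnn, hc, hl⟩, rfl⟩)
          · refine ⟨(snoc_true q).mpr hnn, ?_, ?_⟩
            · simp [List.count_append]; omega
            · simp [hl]
          · have hb : 1 ≤ bal q := by rw [bal_eq, hc, hl]; omega
            refine ⟨(snoc_false q).mpr ⟨hnn, hb⟩, ?_, ?_⟩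
            · simp [List.count_append]; omega
            · simp [hl]
      have hdisj : Disjoint ((· ++ [true]) '' DSet L (u)) ((· ++ [false]) '' DSet L (u+1)) := by
        rw [Set.disjoint_left]
        rintro p ⟨q, -, rfl⟩ ⟨q', -, heq⟩
        have := List.append_inj heq (by simpa using congrArg List.length heq)
        simp at this
      have hinj1 : Function.Injective (fun l : List Bool => l ++ [true]) := fun x y h => by
        simpa using h
      have hinj2 : Function.Injective (fun l : List Bool => l ++ [false]) := fun x y h => by
        simpa using h
      rw [hsplit, Set.ncard_union_eq hdisj ((DSet_finite _ _).image _) ((DSet_finite _ _).image _),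
        Set.ncard_image_of_injective _ hinj1, Set.ncard_image_of_injective _ hinj2, ih, ih]
      have p1 : Nat.choose (L+1) (u+1) = Nat.choose L u + Nat.choose L (u+1) :=
        Nat.choose_succ_succ L u
      have p2 : Nat.choose (L+1) (u+1+1) = Nat.choose L (u+1) + Nat.choose L (u+1+1) :=
        Nat.choose_succ_succ L (u+1)
      have i1 : Nat.choose L (u+1) ≤ Nat.choose L u := choose_desc (by omega)
      have i2 : Nat.choose L (u+1+1) ≤ Nat.choose L (u+1) := choose_desc (by omega)
      omega

end DyckAux

namespace DyckAux

def USet (L t : ℕ) : Set (List Bool × List Bool) :=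
  {q | DyckNonneg (q.1 ++ true :: q.2) ∧ (q.1 ++ true :: q.2).count true = t ∧
    (q.1 ++ true :: q.2).length = L}

def MSet (L t : ℕ) : Set (List Bool × List Bool) :=
  {q ∈ USet L t | q.2.head? ≠ some false}

def WSet (L t : ℕ) : Set (List Bool × List Bool) :=
  {q | DyckNonneg (q.1 ++ true :: false :: q.2) ∧ (q.1 ++ true :: false :: q.2).count true = t ∧
    (q.1 ++ true :: false :: q.2).length = L}

lemma pairset_finite {S : Set (List Bool × List Bool)} {L : ℕ}
    (h : ∀ q ∈ S, q.1.length ≤ L ∧ q.2.length ≤ L) : S.Finite := by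
  apply (Set.Finite.prod (List.finite_length_le Bool L) (List.finite_length_le Bool L)).subset
  intro q hq
  exact ⟨(h q hq).1, (h q hq).2⟩

lemma USet_finite (L t : ℕ) : (USet L t).Finite := by
  apply pairset_finite (L := L)
  rintro q ⟨-, -, hl⟩
  simp [List.length_append] at hl
  omega

lemma MSet_finite (L t : ℕ) : (MSet L t).Finite :=
  (USet_finite L t).subset (Set.sep_subset _ _)

lemma WSet_finite (L t : ℕ) : (WSet L t).Finite := by
  apply pairset_finite (L := L)
  rintro q ⟨-, -, hl⟩
  simp [List.length_append] at hl
  omega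

/-- Split `USet` into marked pairs whose descent is maximal and the rest. -/
lemma USet_split (L t : ℕ) :
    USet L t = MSet L t ∪ ((fun q : List Bool × List Bool => (q.1, false :: q.2)) '' WSet L t) := by
  ext q
  constructor
  · intro hq
    rcases hY : q.2 with _ | ⟨b, Y'⟩
    · left
      refine ⟨hq, ?_⟩
      rw [hY]; simp
    · cases b
      · right
        refine ⟨(q.1, Y'), ?_, ?_⟩
        · obtain ⟨h1, h2, h3⟩ := hq
          rw [hY] at h1 h2 h3
          exact ⟨h1, h2, h3⟩
        · show (q.1, false :: Y') = q
          rw [← hY]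
      · left
        refine ⟨hq, ?_⟩
        rw [hY]; simp
  · rintro (⟨hq, -⟩ | ⟨⟨X, Y'⟩, ⟨h1, h2, h3⟩, rfl⟩)
    · exact hq
    · exact ⟨h1, h2, h3⟩

lemma USet_ncard_split (L t : ℕ) :
    (USet L t).ncard = (MSet L t).ncard + (WSet L t).ncard := by
  have hdisj : Disjoint (MSet L t)
      ((fun q : List Bool × List Bool => (q.1, false :: q.2)) '' WSet L t) := by
    rw [Set.disjoint_left]
    rintro q ⟨-, hhead⟩ ⟨⟨X, Y'⟩, -, rfl⟩
    simp at hhead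
  have hinj : Function.Injective (fun q : List Bool × List Bool => (q.1, false :: q.2)) := by
    rintro ⟨a, b⟩ ⟨c, d⟩ h
    simp at h
    simp [h.1, h.2]
  rw [USet_split, Set.ncard_union_eq hdisj (MSet_finite L t)
    ((WSet_finite L t).image _), Set.ncard_image_of_injective _ hinj]

/-- counting true positions -/
lemma sum_true_pos (l : List Bool) :
    (∑ i : Fin l.length, if l.get i = true then 1 else 0) = l.count true := by
  induction l with
  | nil => simp
  | cons a l ih =>
    show (∑ i : Fin (l.length + 1), if (a :: l).get i = true then 1 else 0)
      = List.count true (a :: l)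
    rw [Fin.sum_univ_succ]
    have h0 : (a :: l).get (0 : Fin (l.length + 1)) = a := rfl
    have hs : ∀ i : Fin l.length, (a :: l).get (i.succ : Fin (l.length + 1)) = l.get i :=
      fun i => rfl
    simp only [h0, hs, ih, List.count_cons]
    cases a <;> simp [Nat.add_comm]

end DyckAux

namespace DyckAux

lemma card_true_pos (l : List Bool) :
    Nat.card {i : Fin l.length // l.get i = true} = l.count true := by
  rw [Nat.card_eq_fintype_card, Fintype.card_subtype, Finset.card_filter, ← sum_true_pos l]

noncomputable instance (L t : ℕ) : Fintype (DSet L t) := (DSet_finite L t).fintype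

lemma len_mid (X Y : List Bool) : X.length < (X ++ true :: Y).length := by simp

lemma get_mid (X Y : List Bool) : (X ++ true :: Y).get ⟨X.length, len_mid X Y⟩ = true := by
  rw [List.get_eq_getElem]
  rw [List.getElem_append_right (le_refl X.length)]
  simp

lemma USet_card (L t : ℕ) : (USet L t).ncard = t * (DSet L t).ncard := by
  classical
  set f : USet L t →
      Σ p : DSet L t, {i : Fin (p : List Bool).length // (p : List Bool).get i = true} :=
    fun q => ⟨⟨q.1.1 ++ true :: q.1.2, q.2⟩, ⟨⟨q.1.1.length, len_mid _ _⟩, get_mid _ _⟩⟩ with hf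
  have hinj : Function.Injective f := by
    rintro ⟨⟨X, Y⟩, hq⟩ ⟨⟨X', Y'⟩, hq'⟩ heq
    have e1 : X ++ true :: Y = X' ++ true :: Y' := congrArg (fun x => (x.1 : List Bool)) heq
    have e2 : X.length = X'.length :=
      congrArg (fun x : (Σ p : DSet L t,
        {i : Fin (p : List Bool).length // (p : List Bool).get i = true}) => (x.2.1.1 : ℕ)) heq
    obtain ⟨rfl, e3⟩ := List.append_inj e1 e2
    simp only [List.cons.injEq] at e3
    simp [e3.2]
  have hsurj : Function.Surjective f := by
    rintro ⟨⟨l, hl⟩, ⟨i, hi⟩, hget⟩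
    have hi' : i < l.length := hi
    have hget' : l.get ⟨i, hi'⟩ = true := hget
    obtain ⟨X, Y, rfl, hXl⟩ : ∃ X Y, X ++ true :: Y = l ∧ X.length = i := by
      refine ⟨l.take i, l.drop (i + 1), ?_, by simp; omega⟩
      have hdrop : l.drop i = true :: l.drop (i + 1) := by
        rw [List.drop_eq_getElem_cons hi']
        rw [List.get_eq_getElem] at hget'
        rw [hget']
      conv_rhs => rw [← List.take_append_drop i l]
      rw [hdrop]
    refine ⟨⟨(X, Y), hl⟩, ?_⟩
    refine Sigma.ext rfl (heq_of_eq ?_)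
    exact Subtype.ext (Fin.ext hXl)
  rw [← Nat.card_coe_set_eq, Nat.card_congr (Equiv.ofBijective f ⟨hinj, hsurj⟩)]
  haveI : ∀ p : DSet L t, Fintype {i : Fin (p : List Bool).length // (p : List Bool).get i = true} :=
    fun p => Subtype.fintype _
  rw [Nat.card_eq_fintype_card, Fintype.card_sigma]
  have hconst : ∀ p : DSet L t,
      Fintype.card {i : Fin (p : List Bool).length // (p : List Bool).get i = true} = t := by
    rintro ⟨p, hp⟩
    rw [← Nat.card_eq_fintype_card, card_true_pos]
    exact hp.2.1
  rw [Finset.sum_congr rfl (fun p _ => hconst p), Finset.sum_const, Finset.card_univ,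
    smul_eq_mul, ← Nat.card_eq_fintype_card, Nat.card_coe_set_eq, Nat.mul_comm]

lemma WtoD {L t : ℕ} {X Y : List Bool} (h : (X, Y) ∈ WSet L t) :
    (X ++ Y) ∈ DSet (L - 2) (t - 1) ∧ X.length < L - 1 := by
  obtain ⟨h1, h2, h3⟩ := h
  have h1' := (nonneg_mid X Y 1 1 (le_refl 1)).mp h1
  have hc : X.count true + 1 + Y.count true = t := by
    simp [List.count_append, List.count_cons] at h2
    omega
  have hl : X.length + 2 + Y.length = L := by
    simp [List.length_append] at h3
    omega
  refine ⟨⟨?_, ?_, ?_⟩, ?_⟩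
  · have h0 : DyckNonneg (X ++ (List.replicate 0 true ++ (List.replicate 0 false ++ Y))) := by
      apply (nonneg_mid X Y 0 0 (le_refl 0)).mpr
      refine ⟨h1'.1, fun i => ?_⟩
      have := h1'.2 i
      push_cast at this ⊢
      linarith
    simpa using h0
  · simp [List.count_append]
    omega
  · simp [List.length_append]
    omega
  · omega

lemma WSet_card (L t : ℕ) (ht : 1 ≤ t) :
    (WSet L t).ncard = (L - 1) * (DSet (L - 2) (t - 1)).ncard := by
  classical
  set f : WSet L t → (DSet (L - 2) (t - 1)) × Fin (L - 1) :=
    fun q => (⟨q.1.1 ++ q.1.2, (WtoD q.2).1⟩, ⟨q.1.1.length, (WtoD q.2).2⟩) with hf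
  have hinj : Function.Injective f := by
    rintro ⟨⟨X, Y⟩, hq⟩ ⟨⟨X', Y'⟩, hq'⟩ heq
    simp only [hf, Prod.mk.injEq, Subtype.mk.injEq, Fin.mk.injEq] at heq
    obtain ⟨rfl, rfl⟩ := List.append_inj heq.1 heq.2
    rfl
  have hsurj : Function.Surjective f := by
    rintro ⟨⟨Q, hQ⟩, ⟨j, hj⟩⟩
    have hL2 : 2 ≤ L := by omega
    have hjQ : j ≤ Q.length := by
      have := hQ.2.2
      omega
    have hmem : (Q.take j, Q.drop j) ∈ WSet L t := by
      refine ⟨?_, ?_, ?_⟩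
      · apply (nonneg_mid (Q.take j) (Q.drop j) 1 1 (le_refl 1)).mpr
        have h0 := (nonneg_mid (Q.take j) (Q.drop j) 0 0 (le_refl 0)).mp
          (by simpa [List.take_append_drop] using hQ.1)
        refine ⟨h0.1, fun i => ?_⟩
        have := h0.2 i
        push_cast at this ⊢
        linarith
      · have hc := hQ.2.1
        have hc' : (Q.take j).count true + (Q.drop j).count true = t - 1 := by
          rw [← List.count_append, List.take_append_drop]
          exact hc
        simp only [List.count_append, List.count_cons]
        simp
        omega
      · have hlen := hQ.2.2
        have hl' : (Q.take j).length + (Q.drop j).length = L - 2 := by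
          rw [List.length_take, List.length_drop]
          omega
        simp only [List.length_append, List.length_cons]
        omega
    refine ⟨⟨(Q.take j, Q.drop j), hmem⟩, ?_⟩
    refine Prod.ext (Subtype.ext ?_) (Fin.ext ?_)
    · simp [hf, List.take_append_drop]
    · show (Q.take j).length = j
      simp [List.length_take]
      omega
  rw [← Nat.card_coe_set_eq, Nat.card_congr (Equiv.ofBijective f ⟨hinj, hsurj⟩),
    Nat.card_prod, Nat.card_coe_set_eq, Nat.card_eq_fintype_card, Fintype.card_fin,
    Nat.mul_comm]

end DyckAux

namespace DyckAux

lemma rdw_rtw (p : Bool → Bool) (l : List Bool) :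
    l.rdropWhile p ++ l.rtakeWhile p = l := by
  rw [List.rdropWhile, List.rtakeWhile, ← List.reverse_append,
    List.takeWhile_append_dropWhile, List.reverse_reverse]

lemma rdrop_norm (A : List Bool) (s : ℕ) (hA : A.getLast? ≠ some true) :
    (A ++ List.replicate s true).rdropWhile (· == true) = A := by
  induction s with
  | zero =>
    simp only [List.replicate_zero, List.append_nil]
    apply List.rdropWhile_eq_self_iff.mpr
    intro h
    have hlast := List.getLast?_eq_getLast h
    cases hb : A.getLast h
    · simp [hb]
    · exfalso; apply hA; rw [hlast, hb]
  | succ s ih =>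
    rw [List.replicate_succ', ← List.append_assoc, List.rdropWhile_concat_pos _ _ _ rfl]
    exact ih

lemma rep_true_unique {A A' : List Bool} {s s' : ℕ}
    (h : A ++ List.replicate s true = A' ++ List.replicate s' true)
    (hA : A.getLast? ≠ some true) (hA' : A'.getLast? ≠ some true) : A = A' ∧ s = s' := by
  have h1 := rdrop_norm A s hA
  have h2 := rdrop_norm A' s' hA'
  rw [h] at h1
  have hAA : A = A' := by rw [← h1, h2]
  refine ⟨hAA, ?_⟩
  rw [hAA] at h
  have := List.append_cancel_left h
  have := congrArg List.length this
  simpa using this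

lemma rdrop_last_ne (X : List Bool) :
    (X.rdropWhile (· == true)).getLast? ≠ some true := by
  intro hcontra
  have hne : X.rdropWhile (· == true) ≠ [] := by
    intro h0; rw [h0] at hcontra; simp at hcontra
  have hlast := List.rdropWhile_last_not (· == true) X hne
  rw [List.getLast?_eq_getLast hne] at hcontra
  simp only [Option.some.injEq] at hcontra
  rw [hcontra] at hlast
  simp at hlast

lemma int_absorb (n k : ℕ) :
    ((k : ℤ) + 1) * (Nat.choose n (k+1) : ℤ) = ((n : ℤ) - k) * (Nat.choose n k : ℤ) := by
  rcases le_or_gt (k+1) n with h | h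
  · have hid := Nat.choose_succ_right_eq n k
    have hk : k ≤ n := by omega
    zify [hk] at hid
    linarith
  · have h1 : Nat.choose n (k+1) = 0 := Nat.choose_eq_zero_of_lt (by omega)
    rcases Nat.lt_or_ge n k with h2 | h2
    · simp [h1, Nat.choose_eq_zero_of_lt h2]
    · have hnk : n = k := by omega
      subst hnk
      simp [h1]

lemma key_id (m p r : ℕ) (hr : 1 ≤ r) (hpr : p + 1 + r = 2*m + 3) :
    r * Nat.choose (p+1) (m+1) + Nat.choose (p+1) (m+3)
      + (p+1) * (Nat.choose p (m+1) - Nat.choose p (m+2))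
    = (m+2) * (Nat.choose (p+2) (m+2) - Nat.choose (p+2) (m+3)) := by
  have h1 : Nat.choose p (m+2) ≤ Nat.choose p (m+1) := choose_desc (by omega)
  have h2 : Nat.choose (p+2) (m+3) ≤ Nat.choose (p+2) (m+2) := choose_desc (by omega)
  zify [h1, h2]
  have pas1 : (Nat.choose (p+2) (m+2) : ℤ) = Nat.choose (p+1) (m+1) + Nat.choose (p+1) (m+2) := by
    have hN : Nat.choose ((p+1)+1) ((m+1)+1) = Nat.choose (p+1) (m+1) + Nat.choose (p+1) ((m+1)+1) :=
      Nat.choose_succ_succ (p+1) (m+1)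
    exact_mod_cast hN
  have pas2 : (Nat.choose (p+2) (m+3) : ℤ) = Nat.choose (p+1) (m+2) + Nat.choose (p+1) (m+3) := by
    have hN : Nat.choose ((p+1)+1) ((m+2)+1) = Nat.choose (p+1) (m+2) + Nat.choose (p+1) ((m+2)+1) :=
      Nat.choose_succ_succ (p+1) (m+2)
    exact_mod_cast hN
  have pas3 : (Nat.choose (p+1) (m+1) : ℤ) = Nat.choose p m + Nat.choose p (m+1) := by
    have hN : Nat.choose (p+1) (m+1) = Nat.choose p m + Nat.choose p (m+1) :=
      Nat.choose_succ_succ p m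
    exact_mod_cast hN
  have pas4 : (Nat.choose (p+1) (m+2) : ℤ) = Nat.choose p (m+1) + Nat.choose p (m+2) := by
    have hN : Nat.choose (p+1) ((m+1)+1) = Nat.choose p (m+1) + Nat.choose p ((m+1)+1) :=
      Nat.choose_succ_succ p (m+1)
    exact_mod_cast hN
  have pas5 : (Nat.choose (p+1) (m+3) : ℤ) = Nat.choose p (m+2) + Nat.choose p (m+3) := by
    have hN : Nat.choose (p+1) ((m+2)+1) = Nat.choose p (m+2) + Nat.choose p ((m+2)+1) :=
      Nat.choose_succ_succ p (m+2)
    exact_mod_cast hN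
  have habs1 := int_absorb p m
  have habs2 := int_absorb p (m+2)
  have hrz : (r : ℤ) = 2*(m:ℤ) + 2 - p := by
    have hpr2 : (p:ℤ) + 1 + r = 2*(m:ℤ) + 3 := by exact_mod_cast hpr
    linarith
  rw [pas1, pas2, pas3, pas4, pas5, hrz]
  push_cast at habs2 ⊢
  linear_combination habs1 + habs2

end DyckAux

/-- Partial Dyck paths from (0,0) to (2n-r, r) (n up steps, n-r down steps, never
below the x-axis) with a distinguished left asymmetric peak of weight k+1: a
decomposition `A ++ u^a ++ d^{k+1} ++ B` with `a ≥ k+2` and both runs maximal. -/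
def PartialLeftAsymPeakMarked (n r k : ℕ) : Type :=
  { q : List Bool × ℕ × List Bool //
      k + 2 ≤ q.2.1 ∧
      q.1.getLast? ≠ some true ∧
      q.2.2.head? ≠ some false ∧
      DyckNonneg (q.1 ++ List.replicate q.2.1 true ++ List.replicate (k + 1) false ++ q.2.2) ∧
      (q.1 ++ List.replicate q.2.1 true ++ List.replicate (k + 1) false ++ q.2.2).count true
        = n ∧
      (q.1 ++ List.replicate q.2.1 true ++ List.replicate (k + 1) false ++ q.2.2).length
        = 2 * n - r }


namespace DyckAux

lemma toM_mem {M k r : ℕ} {A B : List Bool} {a : ℕ}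
    (hk : k + 2 ≤ a) (hB : B.head? ≠ some false)
    (hnn : DyckNonneg (A ++ List.replicate a true ++ List.replicate (k+1) false ++ B))
    (hc : (A ++ List.replicate a true ++ List.replicate (k+1) false ++ B).count true = M + k + 1)
    (hl : (A ++ List.replicate a true ++ List.replicate (k+1) false ++ B).length
      = 2 * (M + k + 1) - r)
    (hrM : r ≤ M) (hr : 1 ≤ r) :
    (A ++ List.replicate (a - (k+2)) true, B) ∈ MSet (2*M - r) M := by
  rw [List.append_assoc, List.append_assoc] at hnn
  obtain ⟨hXnn, hcond⟩ := (nonneg_mid A B a (k+1) (by omega)).mp hnn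
  refine ⟨⟨?_, ?_, ?_⟩, hB⟩
  · show DyckNonneg ((A ++ List.replicate (a - (k+2)) true) ++ true :: B)
    have hre : (A ++ List.replicate (a - (k+2)) true) ++ true :: B
        = A ++ (List.replicate (a - (k+2) + 1) true ++ (List.replicate 0 false ++ B)) := by
      simp [List.replicate_succ', List.append_assoc]
    rw [hre]
    refine (nonneg_mid A B _ 0 (by omega)).mpr ⟨hXnn, fun i => ?_⟩
    have h2 := hcond i
    have hcast1 : ((a - (k+2) + 1 : ℕ) : ℤ) = (a : ℤ) - (k + 1) := by omega
    rw [hcast1]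
    push_cast at h2 ⊢
    linarith
  · show ((A ++ List.replicate (a - (k+2)) true) ++ true :: B).count true = M
    simp [List.count_append, List.count_replicate, List.count_cons] at hc ⊢
    omega
  · show ((A ++ List.replicate (a - (k+2)) true) ++ true :: B).length = 2*M - r
    simp [List.length_append] at hl ⊢
    omega

lemma card_T (M k r : ℕ) (hr : 1 ≤ r) (hrM : r ≤ M) :
    Nat.card (PartialLeftAsymPeakMarked (M + k + 1) r k) = (MSet (2*M - r) M).ncard := by
  classical
  set f : PartialLeftAsymPeakMarked (M + k + 1) r k → MSet (2*M - r) M :=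
    fun q => ⟨(q.1.1 ++ List.replicate (q.1.2.1 - (k+2)) true, q.1.2.2),
      toM_mem q.2.1 q.2.2.2.1 q.2.2.2.2.1 q.2.2.2.2.2.1 q.2.2.2.2.2.2 hrM hr⟩ with hf
  have hinj : Function.Injective f := by
    rintro ⟨⟨A, a, B⟩, h⟩ ⟨⟨A', a', B'⟩, h'⟩ heq
    simp only [hf, Subtype.mk.injEq, Prod.mk.injEq] at heq
    obtain ⟨e1, e2⟩ := heq
    obtain ⟨hAA, hss⟩ := rep_true_unique e1 h.2.1 h'.2.1
    have haa : a = a' := by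
      have hk1 : k + 2 ≤ a := h.1
      have hk2 : k + 2 ≤ a' := h'.1
      omega
    apply Subtype.ext
    simp [hAA, haa, e2]
  have hsurj : Function.Surjective f := by
    rintro ⟨⟨X, Y⟩, hmem, hhead⟩
    have hnn : DyckNonneg (X ++ true :: Y) := hmem.1
    have hc : (X ++ true :: Y).count true = M := hmem.2.1
    have hl : (X ++ true :: Y).length = 2 * M - r := hmem.2.2
    set A := X.rdropWhile (· == true) with hAdef
    set s := (X.rtakeWhile (· == true)).length with hsdef
    have hR : X.rtakeWhile (· == true) = List.replicate s true := by
      rw [hsdef]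
      apply List.eq_replicate_length.mpr
      intro b hb
      have := List.mem_rtakeWhile_imp hb
      simpa using this
    have hXsplit : A ++ List.replicate s true = X := by
      rw [← hR, hAdef]
      exact rdw_rtw _ X
    have hA : A.getLast? ≠ some true := rdrop_last_ne X
    have hXe : X ++ true :: Y
        = A ++ (List.replicate (s + 1) true ++ (List.replicate 0 false ++ Y)) := by
      rw [← hXsplit]
      simp [List.replicate_succ', List.append_assoc]
    rw [hXe] at hnn
    obtain ⟨hAnn, hAcond⟩ := (nonneg_mid A Y (s+1) 0 (by omega)).mp hnn
    have hcX : X.count true = A.count true + s := by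
      rw [← hXsplit]
      simp [List.count_append, List.count_replicate]
    have hlX : X.length = A.length + s := by
      rw [← hXsplit]
      simp [List.length_append]
    refine ⟨⟨(A, k + 2 + s, Y), ?_, hA, hhead, ?_, ?_, ?_⟩, ?_⟩
    · show k + 2 ≤ k + 2 + s
      omega
    · show DyckNonneg (A ++ List.replicate (k+2+s) true ++ List.replicate (k+1) false ++ Y)
      rw [List.append_assoc, List.append_assoc]
      refine (nonneg_mid A Y (k+2+s) (k+1) (by omega)).mpr ⟨hAnn, fun i => ?_⟩
      have h2 := hAcond i
      push_cast at h2 ⊢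
      linarith
    · show (A ++ List.replicate (k+2+s) true ++ List.replicate (k+1) false ++ Y).count true
        = M + k + 1
      simp only [List.count_append, List.count_replicate, List.count_cons] at hc ⊢
      simp at hc ⊢
      omega
    · show (A ++ List.replicate (k+2+s) true ++ List.replicate (k+1) false ++ Y).length
        = 2 * (M + k + 1) - r
      simp only [List.length_append, List.length_replicate, List.length_cons] at hl ⊢
      omega
    · apply Subtype.ext
      show (A ++ List.replicate (k + 2 + s - (k+2)) true, Y) = (X, Y)
      rw [show k + 2 + s - (k+2) = s from by omega, hXsplit]

  rw [Nat.card_congr (Equiv.ofBijective f ⟨hinj, hsurj⟩), Nat.card_coe_set_eq]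

end DyckAux


namespace DyckAux

lemma key_id' (M r : ℕ) (hr : 1 ≤ r) (h2 : 2 ≤ M) (hrM : r ≤ M) :
    r * Nat.choose (2*M - r - 1) (M - 1) + Nat.choose (2*M - r - 1) (M + 1)
      + (2*M - r - 1) * (Nat.choose (2*M - r - 2) (M - 1) - Nat.choose (2*M - r - 2) M)
    = M * (Nat.choose (2*M - r) M - Nat.choose (2*M - r) (M + 1)) := by
  obtain ⟨m, rfl⟩ : ∃ m, M = m + 2 := ⟨M - 2, by omega⟩
  obtain ⟨p, hp⟩ : ∃ p, 2*(m+2) - r - 2 = p := ⟨_, rfl⟩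
  have hA : 2*(m+2) - r = p + 2 := by omega
  have hB : 2*(m+2) - r - 1 = p + 1 := by omega
  have hC : m + 2 - 1 = m + 1 := by omega
  have hD : m + 2 + 1 = m + 3 := by omega
  rw [hp, hB, hA, hC, hD]
  exact key_id m p r hr (by omega)

end DyckAux


/-- For r ≥ 1, k ≥ 0 and n ≥ k+r+1, the total number of left asymmetric peaks of
weight k+1 over all partial Dyck paths from (0,0) to (2n-r, r) equals
r·binom(2(n-k)-r-3, n-k-r-1) + binom(2(n-k)-r-3, n-k). -/
theorem partial_left_asym_peak_count (n k r : ℕ) (hr : 1 ≤ r) (h : k + r + 1 ≤ n) :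
    Nat.card (PartialLeftAsymPeakMarked n r k)
      = r * Nat.choose (2 * (n - k) - r - 3) (n - k - r - 1)
        + Nat.choose (2 * (n - k) - r - 3) (n - k) := by
  classical
  obtain ⟨M, rfl⟩ : ∃ M, n = M + k + 1 := ⟨n - k - 1, by omega⟩
  have hrM : r ≤ M := by omega
  have e1 : 2 * (M + k + 1 - k) - r - 3 = 2*M - r - 1 := by omega
  have e2 : M + k + 1 - k - r - 1 = M - r := by omega
  have e3 : M + k + 1 - k = M + 1 := by omega
  rw [e1, e2, e3]
  have e4 : Nat.choose (2*M - r - 1) (M - r) = Nat.choose (2*M - r - 1) (M - 1) := by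
    have h1 : M - 1 ≤ 2*M - r - 1 := by omega
    have h5 := Nat.choose_symm h1
    rw [show 2*M - r - 1 - (M - 1) = M - r from by omega] at h5
    exact h5
  rw [e4]
  rw [DyckAux.card_T M k r hr hrM]
  have hU := DyckAux.USet_ncard_split (2*M - r) M
  have hUc := DyckAux.USet_card (2*M - r) M
  have hWc := DyckAux.WSet_card (2*M - r) M (by omega)
  have hD1 := DyckAux.DSet_card (2*M - r) M
  have hD2 := DyckAux.DSet_card (2*M - r - 2) (M - 1)
  rw [show M - 1 + 1 = M from by omega] at hD2
  rcases Nat.lt_or_ge M 2 with hM | hM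
  · have hM1 : M = 1 := by omega
    have hr1 : r = 1 := by omega
    subst hM1
    subst hr1
    have hval : (DyckAux.DSet (2*1 - 1) 1).ncard = 1 := by
      rw [hD1]; decide
    have hW0 : (DyckAux.WSet (2*1 - 1) 1).ncard = 0 := by
      rw [hWc, show (2*1 - 1 - 1 : ℕ) = 0 from by norm_num, Nat.zero_mul]
    have hg : (1:ℕ) * Nat.choose (2*1 - 1 - 1) (1 - 1) + Nat.choose (2*1 - 1 - 1) (1+1) = 1 := by
      decide
    rw [hg]
    rw [hval] at hUc
    omega
  · have hkey := DyckAux.key_id' M r hr hM hrM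
    rw [hD2] at hWc
    rw [hUc, hD1] at hU
    omega
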